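/- Let (𝒜, φ) be a non-commutative probability space and (𝒜_i)_{i∈I} a family of subalgebras that is BMT independent with respect to a digraph G = (I, E). If I carries a total order < and G is the digraph of this order, i.e., (i, j) ∈ E if and only if j < i, then the family (𝒜_i)_{i∈I} is monotone independent. -/

import Mathlib

open scoped Classical
open Filter

noncomputable section

/-- The relation defining the kernel of `f` restricted to the index set `S`,
subordinated to the digraph with edge relation `E`: `k ∼ k'` iff `f k = f k'` and
every `l ∈ S` strictly between `k` and `k'` with `f l ≠ f k` satisfies `(f l, f k) ∈ E`. -/
def kerGRelOn {m : ℕ} {V : Type*} (E : V → V → Prop) (f : Fin m → V)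
    (S : Finset (Fin m)) (k k' : Fin m) : Prop :=
  f k = f k' ∧ ∀ l ∈ S, min k k' < l → l < max k k' → f l ≠ f k → E (f l) (f k)

/-- The blocks of the kernel of `f|_S` subordinated to the digraph `E`. -/
def kerGBlocks {m : ℕ} {V : Type*} (E : V → V → Prop) (f : Fin m → V)
    (S : Finset (Fin m)) : Finset (Finset (Fin m)) :=
  S.image fun k => S.filter fun k' => kerGRelOn E f S k k'

/-- The blocks of the plain kernel `ker[f]` of `f : [m] → V`. -/
def kerBlocks {m : ℕ} {V : Type*} (f : Fin m → V) : Finset (Finset (Fin m)) :=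
  Finset.univ.image fun k => Finset.univ.filter fun k' => f k = f k'

/-- The product of `a k` for `k ∈ B`, taken in increasing order of `k`. -/
def blockProd {A : Type*} [Monoid A] {m : ℕ} (a : Fin m → A) (B : Finset (Fin m)) : A :=
  ((B.sort (· ≤ ·)).map a).prod

/-- The edge set of the nesting-crossing graph of the partition `π`, relabeled along `f`:
the pair `(f-label of B, f-label of C)` is an edge whenever `B ≠ C` are blocks of `π` and
some `l ∈ B` lies strictly between two elements (equivalently, between min and max) of `C`. -/
def nestCrossEdges {m : ℕ} {V : Type*} (π : Finset (Finset (Fin m))) (f : Fin m → V) :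
    Set (V × V) :=
  { p | ∃ B ∈ π, ∃ C ∈ π, B ≠ C ∧
      (∃ l ∈ B, ∃ c₁ ∈ C, ∃ c₂ ∈ C, c₁ < l ∧ l < c₂) ∧
      (∃ k ∈ B, f k = p.1) ∧ (∃ k' ∈ C, f k' = p.2) }

/-- A family of (non-unital) subalgebras of a non-commutative probability space `(𝒜, φ)`
is BMT independent with respect to the digraph `E` on the index set `I`. -/
def BMTIndep {𝒜 : Type*} [Ring 𝒜] [Algebra ℂ 𝒜] (φ : 𝒜 →ₗ[ℂ] ℂ)
    {I : Type*} (E : I → I → Prop) (A : I → NonUnitalSubalgebra ℂ 𝒜) : Prop :=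
  ∀ (m : ℕ), 1 ≤ m → ∀ (idx : Fin m → I) (a : Fin m → 𝒜),
    (∀ k, a k ∈ A (idx k)) →
    φ (List.ofFn a).prod = ∏ B ∈ kerGBlocks E idx Finset.univ, φ (blockProd a B)

/-- Random variables `a 0, …, a (N-1)` are BMT independent with respect to the digraph `E`. -/
def BMTIndepVars {𝒜 : Type*} [Ring 𝒜] [Algebra ℂ 𝒜] (φ : 𝒜 →ₗ[ℂ] ℂ)
    {N : ℕ} (E : Fin N → Fin N → Prop) (a : Fin N → 𝒜) : Prop :=
  ∀ (m : ℕ) (idx : Fin m → Fin N),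
    φ (List.ofFn fun k => a (idx k)).prod
      = ∏ B ∈ kerGBlocks E idx Finset.univ, φ (blockProd (fun k => a (idx k)) B)


section AuxStmt4

lemma kerGRelOn_refl' {m : ℕ} {V : Type*} (E : V → V → Prop) (f : Fin m → V)
    (S : Finset (Fin m)) (k : Fin m) : kerGRelOn E f S k k := by
  refine ⟨rfl, fun l _ h1 h2 _ => ?_⟩
  simp only [min_self, max_self] at h1 h2
  exact absurd (h1.trans h2) (lt_irrefl _)

lemma kerGRelOn_symm' {m : ℕ} {V : Type*} {E : V → V → Prop} {f : Fin m → V}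
    {S : Finset (Fin m)} {k k' : Fin m} (h : kerGRelOn E f S k k') : kerGRelOn E f S k' k := by
  obtain ⟨h1, h2⟩ := h
  refine ⟨h1.symm, fun l hl h3 h4 h5 => ?_⟩
  rw [min_comm] at h3
  rw [max_comm] at h4
  rw [← h1] at h5 ⊢
  exact h2 l hl h3 h4 h5

lemma blockProd_singleton' {A : Type*} [Monoid A] {m : ℕ} (a : Fin m → A) (k : Fin m) :
    blockProd a {k} = a k := by
  simp [blockProd, Finset.sort_singleton]

lemma sort_image_strictMono' {m n : ℕ} {e : Fin n → Fin m} (he : StrictMono e)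
    (B : Finset (Fin n)) :
    (B.image e).sort (· ≤ ·) = (B.sort (· ≤ ·)).map e := by
  apply fun hp h1 h2 => List.Perm.eq_of_pairwise' (r := (· ≤ · : Fin m → Fin m → Prop)) h1 h2 hp
  · rw [← Multiset.coe_eq_coe, Finset.sort_eq,
      Finset.image_val_of_injOn (he.injective.injOn), ← Multiset.map_coe, Finset.sort_eq]
  · exact Finset.pairwise_sort _ _
  · exact List.Pairwise.map e (fun a b h => he.monotone h) (Finset.pairwise_sort B _)

lemma blockProd_image' {A : Type*} [Monoid A] {m n : ℕ} {e : Fin n → Fin m} (he : StrictMono e)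
    (a : Fin m → A) (B : Finset (Fin n)) :
    blockProd a (B.image e) = blockProd (fun j => a (e j)) B := by
  unfold blockProd
  rw [sort_image_strictMono' he, List.map_map]
  rfl

/-- The order embedding of `Fin (m-1)` into `Fin m` skipping the value `k`. -/
def skipEmb (m k : ℕ) : Fin (m - 1) → Fin m := fun j =>
  if (j : ℕ) < k then ⟨j, by have := j.isLt; omega⟩ else ⟨(j : ℕ) + 1, by have := j.isLt; omega⟩

lemma skipEmb_strictMono (m k : ℕ) : StrictMono (skipEmb m k) := by
  intro p q hpq
  have hpq' : (p : ℕ) < (q : ℕ) := hpq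
  unfold skipEmb
  split_ifs with h1 h2 h2 <;> exact Fin.mk_lt_mk.mpr (by omega)

lemma skipEmb_ne (m k : ℕ) (hk : k < m) (j : Fin (m - 1)) :
    skipEmb m k j ≠ ⟨k, hk⟩ := by
  unfold skipEmb
  split_ifs with h <;> exact Fin.ne_of_val_ne (by simp; omega)

lemma skipEmb_surj (m k : ℕ) (hk : k < m) (x : Fin m) (hx : x ≠ ⟨k, hk⟩) :
    ∃ j : Fin (m - 1), skipEmb m k j = x := by
  have hxk : (x : ℕ) ≠ k := fun h => hx (Fin.ext h)
  by_cases hlt : (x : ℕ) < k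
  · refine ⟨⟨x, by have := x.isLt; omega⟩, ?_⟩
    unfold skipEmb
    rw [if_pos hlt]
  · refine ⟨⟨(x : ℕ) - 1, by have := x.isLt; omega⟩, ?_⟩
    unfold skipEmb
    rw [if_neg (by simp; omega)]
    exact Fin.ext (by simp; omega)

lemma skipEmb_val_lt (m k : ℕ) (j : Fin (m - 1)) (h : (j : ℕ) < k) :
    skipEmb m k j = ⟨j, by have := j.isLt; omega⟩ := by
  unfold skipEmb; rw [if_pos h]

lemma skipEmb_val_ge (m k : ℕ) (j : Fin (m - 1)) (h : ¬ (j : ℕ) < k) :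
    skipEmb m k j = ⟨(j : ℕ) + 1, by have := j.isLt; omega⟩ := by
  unfold skipEmb; rw [if_neg h]

lemma skipEmb_val_cases (m k : ℕ) (j : Fin (m - 1)) :
    ((skipEmb m k j : Fin m) : ℕ) = (j : ℕ) ∧ (j : ℕ) < k ∨
      ((skipEmb m k j : Fin m) : ℕ) = (j : ℕ) + 1 ∧ k ≤ (j : ℕ) := by
  unfold skipEmb
  split_ifs with h
  · exact Or.inl ⟨rfl, h⟩
  · exact Or.inr ⟨rfl, by omega⟩

lemma eraseIdx_ofFn_skipEmb {A : Type*} (m k : ℕ) (hk : k < m) (a : Fin m → A) :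
    (List.ofFn a).eraseIdx k = List.ofFn (fun j => a (skipEmb m k j)) := by
  apply List.ext_getElem
  · simp [List.length_eraseIdx, hk]
  · intro j hj1 hj2
    have hj : j < m - 1 := by simpa using hj2
    rw [List.getElem_eraseIdx]
    simp only [List.getElem_ofFn]
    split_ifs with h
    · congr 1
      exact (skipEmb_val_lt m k ⟨j, hj⟩ h).symm
    all_goals (congr 1; exact (skipEmb_val_ge m k ⟨j, hj⟩ h).symm)

end AuxStmt4

/-- BMT independence with respect to the digraph of a total order
(`(i,j)` an edge iff `j < i`) gives monotone independence (conditions M.1 and M.2). -/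
theorem stmt4 {𝒜 : Type*} [Ring 𝒜] [Algebra ℂ 𝒜] (φ : 𝒜 →ₗ[ℂ] ℂ) (hφ : φ 1 = 1)
    {I : Type*} [LinearOrder I] (E : I → I → Prop)
    (horder : ∀ v w : I, E v w ↔ w < v)
    (A : I → NonUnitalSubalgebra ℂ 𝒜) (hindep : BMTIndep φ E A) :
    ∀ (m : ℕ), 1 ≤ m → ∀ (idx : Fin m → I) (a : Fin m → 𝒜),
      (∀ k, a k ∈ A (idx k)) →
      (∀ (k : ℕ) (h : k + 1 < m), idx ⟨k, by omega⟩ ≠ idx ⟨k + 1, h⟩) →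
      ((∀ (k : ℕ) (h1 : 1 ≤ k) (h2 : k + 1 < m),
          idx ⟨k - 1, by omega⟩ < idx ⟨k, by omega⟩ →
          idx ⟨k + 1, h2⟩ < idx ⟨k, by omega⟩ →
          φ (List.ofFn a).prod
            = φ (a ⟨k, by omega⟩) * φ ((List.ofFn a).eraseIdx k).prod)
        ∧
        (∀ (k : ℕ) (hk : k < m),
          (∀ (j : ℕ) (hj : j + 1 ≤ k), idx ⟨j + 1, by omega⟩ < idx ⟨j, by omega⟩) →
          (∀ (j : ℕ) (hj : k ≤ j) (hj2 : j + 1 < m), idx ⟨j, by omega⟩ < idx ⟨j + 1, hj2⟩) →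
          φ (List.ofFn a).prod = ∏ k : Fin m, φ (a k))) := by
  intro m hm idx a hmem hne
  constructor
  · -- M.1
    intro k h1 h2 hleft hright
    set K : Fin m := ⟨k, by omega⟩ with hKdef
    set e : Fin (m - 1) → Fin m := skipEmb m k with hedef
    have he : StrictMono e := skipEmb_strictMono m k
    have heK : ∀ j, e j ≠ K := fun j => skipEmb_ne m k (by omega) j
    have hsurj : ∀ x : Fin m, x ≠ K → ∃ j, e j = x :=
      fun x hx => skipEmb_surj m k (by omega) x hx
    set idx' : Fin (m - 1) → I := fun j => idx (e j) with hidx'def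
    set a' : Fin (m - 1) → 𝒜 := fun j => a (e j) with ha'def
    have hleft' : idx (⟨k - 1, by omega⟩ : Fin m) < idx K := hleft
    have hright' : idx (⟨k + 1, h2⟩ : Fin m) < idx K := hright
    -- the block of K is the singleton {K}
    have hKblock : ∀ y : Fin m, kerGRelOn E idx Finset.univ K y → y = K := by
      rintro y ⟨heq, hbet⟩
      by_contra hy
      rcases lt_or_gt_of_ne hy with hlt | hgt
      · have hyv : (y : ℕ) < k := hlt
        by_cases hadj : (y : ℕ) = k - 1
        · have h3 : idx (⟨k - 1, by omega⟩ : Fin m) ≠ idx K := by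
            have h4 := hne (k - 1) (by omega)
            have hq : idx (⟨k - 1 + 1, by omega⟩ : Fin m) = idx K := by
              congr 1
              exact Fin.ext (show k - 1 + 1 = k by omega)
            rw [hq] at h4
            exact h4
          apply h3
          have hy' : y = (⟨k - 1, by omega⟩ : Fin m) := Fin.ext hadj
          rw [← hy', ← heq]
        · have hb := hbet ⟨k - 1, by omega⟩ (Finset.mem_univ _)
            (by rw [min_eq_right hlt.le]; exact Fin.lt_def.mpr (show (y : ℕ) < k - 1 by omega))
            (by rw [max_eq_left hlt.le]; exact Fin.lt_def.mpr (show k - 1 < k by omega))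
            (ne_of_lt hleft')
          rw [horder] at hb
          exact absurd hb (not_lt.mpr hleft'.le)
      · have hyv : k < (y : ℕ) := hgt
        by_cases hadj : (y : ℕ) = k + 1
        · have h3 := hne k h2
          apply h3
          have hy' : y = (⟨k + 1, h2⟩ : Fin m) := Fin.ext hadj
          rw [← hy']
          exact heq
        · have hb := hbet ⟨k + 1, h2⟩ (Finset.mem_univ _)
            (by rw [min_eq_left hgt.le]; exact Fin.lt_def.mpr (show k < k + 1 by omega))
            (by rw [max_eq_right hgt.le]; exact Fin.lt_def.mpr (show k + 1 < (y : ℕ) by omega))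
            (ne_of_lt hright')
          rw [horder] at hb
          exact absurd hb (not_lt.mpr hright'.le)
    -- transfer of the kernel relation along the embedding e
    have hrelLt : ∀ p q : Fin (m - 1), p < q →
        (kerGRelOn E idx' Finset.univ p q ↔ kerGRelOn E idx Finset.univ (e p) (e q)) := by
      intro p q hpq
      have hepq : e p < e q := he hpq
      constructor
      · rintro ⟨heq, hbet⟩
        refine ⟨heq, ?_⟩
        intro l _ hl1 hl2 hlne
        rw [min_eq_left hepq.le] at hl1
        rw [max_eq_right hepq.le] at hl2
        by_cases hlK : l = K
        · subst hlK
          rw [horder]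
          by_contra hcon
          have hKlt : idx K < idx (e p) := lt_of_le_of_ne (not_lt.mp hcon) hlne
          have hl1' : ((e p) : ℕ) < k := hl1
          have hl2' : k < ((e q) : ℕ) := hl2
          by_cases hPe : ((e p) : ℕ) = k - 1
          · have hPL : e p = (⟨k - 1, by omega⟩ : Fin m) := Fin.ext hPe
            have h5 : idx (e p) < idx K := by rw [hPL]; exact hleft'
            exact absurd h5 (not_lt.mpr hKlt.le)
          · have hl'lt : k - 1 < m - 1 := by omega
            have hel' : e (⟨k - 1, hl'lt⟩ : Fin (m - 1)) = (⟨k - 1, by omega⟩ : Fin m) := by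
              rw [hedef]
              exact skipEmb_val_lt m k ⟨k - 1, hl'lt⟩ (show k - 1 < k by omega)
            have hid : idx (e ⟨k - 1, hl'lt⟩) < idx K := by rw [hel']; exact hleft'
            have hvp := skipEmb_val_cases m k p
            rw [← hedef] at hvp
            have hvq := skipEmb_val_cases m k q
            rw [← hedef] at hvq
            have lt1 : p < (⟨k - 1, hl'lt⟩ : Fin (m - 1)) :=
              Fin.lt_def.mpr (show (p : ℕ) < k - 1 by
                rcases hvp with ⟨hv, hv2⟩ | ⟨hv, hv2⟩ <;> omega)
            have lt2 : (⟨k - 1, hl'lt⟩ : Fin (m - 1)) < q :=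
              Fin.lt_def.mpr (show k - 1 < (q : ℕ) by
                rcases hvq with ⟨hv, hv2⟩ | ⟨hv, hv2⟩ <;> omega)
            have hb := hbet ⟨k - 1, hl'lt⟩ (Finset.mem_univ _)
              (by rw [min_eq_left hpq.le]; exact lt1)
              (by rw [max_eq_right hpq.le]; exact lt2)
              (ne_of_lt (hid.trans hKlt))
            rw [horder] at hb
            exact absurd hb (not_lt.mpr (hid.trans hKlt).le)
        · obtain ⟨l0, rfl⟩ := hsurj l hlK
          refine hbet l0 (Finset.mem_univ _) ?_ ?_ hlne
          · rw [min_eq_left hpq.le]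
            exact he.lt_iff_lt.mp hl1
          · rw [max_eq_right hpq.le]
            exact he.lt_iff_lt.mp hl2
      · rintro ⟨heq, hbet⟩
        refine ⟨heq, ?_⟩
        intro l' _ hl1 hl2 hl3
        rw [min_eq_left hpq.le] at hl1
        rw [max_eq_right hpq.le] at hl2
        refine hbet (e l') (Finset.mem_univ _) ?_ ?_ hl3
        · rw [min_eq_left hepq.le]
          exact he hl1
        · rw [max_eq_right hepq.le]
          exact he hl2
    have hrel : ∀ p q : Fin (m - 1),
        kerGRelOn E idx' Finset.univ p q ↔ kerGRelOn E idx Finset.univ (e p) (e q) := by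
      intro p q
      rcases lt_trichotomy p q with h | h | h
      · exact hrelLt p q h
      · subst h
        exact ⟨fun _ => kerGRelOn_refl' _ _ _ _, fun _ => kerGRelOn_refl' _ _ _ _⟩
      · constructor
        · intro hh
          exact kerGRelOn_symm' ((hrelLt q p h).mp (kerGRelOn_symm' hh))
        · intro hh
          exact kerGRelOn_symm' ((hrelLt q p h).mpr (kerGRelOn_symm' hh))
    -- description of the blocks
    have hBlmap : ∀ p : Fin (m - 1),
        (Finset.univ.filter fun y => kerGRelOn E idx Finset.univ (e p) y)
          = (Finset.univ.filter fun q => kerGRelOn E idx' Finset.univ p q).image e := by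
      intro p
      ext y
      simp only [Finset.mem_filter, Finset.mem_image, Finset.mem_univ, true_and]
      constructor
      · intro hy
        have hyK : y ≠ K := by
          rintro rfl
          exact heK p (hKblock (e p) (kerGRelOn_symm' hy))
        obtain ⟨q, rfl⟩ := hsurj y hyK
        exact ⟨q, (hrel p q).mpr hy, rfl⟩
      · rintro ⟨q, hq, rfl⟩
        exact (hrel p q).mp hq
    have hKblockEq : (Finset.univ.filter fun y => kerGRelOn E idx Finset.univ K y)
        = ({K} : Finset (Fin m)) := by
      ext y
      simp only [Finset.mem_filter, Finset.mem_univ, true_and, Finset.mem_singleton]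
      exact ⟨fun h => hKblock y h, fun h => by rw [h]; exact kerGRelOn_refl' _ _ _ _⟩
    have hblocks : kerGBlocks E idx Finset.univ
        = insert ({K} : Finset (Fin m))
            ((kerGBlocks E idx' Finset.univ).image (Finset.image e)) := by
      unfold kerGBlocks
      ext B
      simp only [Finset.mem_insert, Finset.mem_image, Finset.mem_univ, true_and]
      constructor
      · rintro ⟨x, rfl⟩
        by_cases hx : x = K
        · subst hx
          left
          exact hKblockEq
        · right
          obtain ⟨p, rfl⟩ := hsurj x hx
          exact ⟨_, ⟨p, rfl⟩, (hBlmap p).symm⟩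
      · rintro (rfl | ⟨B', ⟨p, rfl⟩, rfl⟩)
        · exact ⟨K, hKblockEq⟩
        · exact ⟨e p, hBlmap p⟩
    have hKnot : ({K} : Finset (Fin m))
        ∉ (kerGBlocks E idx' Finset.univ).image (Finset.image e) := by
      rw [Finset.mem_image]
      rintro ⟨B', hB', hBe⟩
      unfold kerGBlocks at hB'
      rw [Finset.mem_image] at hB'
      obtain ⟨p, -, rfl⟩ := hB'
      have hp : p ∈ Finset.univ.filter fun q => kerGRelOn E idx' Finset.univ p q :=
        Finset.mem_filter.mpr ⟨Finset.mem_univ _, kerGRelOn_refl' _ _ _ _⟩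
      have hKm : e p ∈ ({K} : Finset (Fin m)) := by
        rw [← hBe]
        exact Finset.mem_image_of_mem e hp
      exact heK p (Finset.mem_singleton.mp hKm)
    -- putting everything together
    have hmem' : ∀ j, a' j ∈ A (idx' j) := fun j => hmem (e j)
    have hinj : ∀ x ∈ kerGBlocks E idx' Finset.univ, ∀ y ∈ kerGBlocks E idx' Finset.univ,
        Finset.image e x = Finset.image e y → x = y :=
      fun x _ y _ h => Finset.image_injective he.injective h
    have hcongr : ∏ B' ∈ kerGBlocks E idx' Finset.univ, φ (blockProd a (Finset.image e B'))
        = ∏ B' ∈ kerGBlocks E idx' Finset.univ, φ (blockProd a' B') :=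
      Finset.prod_congr rfl (fun B' _ => by rw [blockProd_image' he (a := a), ha'def])
    rw [hindep m hm idx a hmem, hblocks, Finset.prod_insert hKnot, blockProd_singleton',
      Finset.prod_image hinj, hcongr,
      ← hindep (m - 1) (by omega) idx' a' hmem',
      eraseIdx_ofFn_skipEmb m k (by omega) a]
  · -- M.2
    intro k hk hdec hinc
    have claim1 : ∀ (q p : ℕ) (hq : q < m) (hp : p < m), q ≤ k → p < q →
        idx ⟨q, hq⟩ < idx ⟨p, hp⟩ := by
      intro q
      induction q with
      | zero => intro p _ _ _ h; omega
      | succ n ih =>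
        intro p hq hp hqk hpq
        have h0 : idx ⟨n + 1, hq⟩ < idx ⟨n, by omega⟩ := hdec n (by omega)
        rcases Nat.lt_or_ge p n with h | h
        · exact h0.trans (ih p (by omega) hp (by omega) h)
        · have hpn : p = n := by omega
          subst hpn
          exact h0
    have claim2 : ∀ (q p : ℕ) (hq : q < m) (hp : p < m), k ≤ p → p < q →
        idx ⟨p, hp⟩ < idx ⟨q, hq⟩ := by
      intro q
      induction q with
      | zero => intro p _ _ _ h; omega
      | succ n ih =>
        intro p hq hp hkp hpq
        have h0 : idx ⟨n, by omega⟩ < idx ⟨n + 1, hq⟩ := hinc n (by omega) hq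
        rcases Nat.lt_or_ge p n with h | h
        · exact (ih p (by omega) hp hkp h).trans h0
        · have hpn : p = n := by omega
          subst hpn
          exact h0
    have key : ∀ p q : Fin m, p < q → kerGRelOn E idx Finset.univ p q → False := by
      rintro p q hpq ⟨heq, hbet⟩
      by_cases hq : (q : ℕ) ≤ k
      · exact absurd heq (ne_of_gt (claim1 (q : ℕ) (p : ℕ) q.isLt p.isLt hq hpq))
      · by_cases hp : k ≤ (p : ℕ)
        · exact absurd heq (ne_of_lt (claim2 (q : ℕ) (p : ℕ) q.isLt p.isLt hp hpq))
        · have hlkp : idx ⟨k, hk⟩ < idx ⟨(p : ℕ), p.isLt⟩ :=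
            claim1 k (p : ℕ) hk p.isLt (le_refl k) (by omega)
          have hb := hbet ⟨k, hk⟩ (Finset.mem_univ _)
            (by rw [min_eq_left hpq.le]; exact Fin.lt_def.mpr (show (p : ℕ) < k by omega))
            (by rw [max_eq_right hpq.le]; exact Fin.lt_def.mpr (show k < (q : ℕ) by omega))
            (ne_of_lt hlkp)
          rw [horder] at hb
          exact absurd hb (not_lt.mpr hlkp.le)
    have hsingle : ∀ p q : Fin m, kerGRelOn E idx Finset.univ p q → q = p := by
      intro p q h
      rcases lt_trichotomy p q with h1 | h1 | h1
      · exact absurd h (fun hh => key p q h1 hh)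
      · exact h1.symm
      · exact absurd (kerGRelOn_symm' h) (fun hh => key q p h1 hh)
    rw [hindep m hm idx a hmem]
    have hblocks : kerGBlocks E idx Finset.univ
        = Finset.univ.image fun p => ({p} : Finset (Fin m)) := by
      unfold kerGBlocks
      apply Finset.image_congr
      intro p _
      ext y
      simp only [Finset.mem_filter, Finset.mem_univ, true_and, Finset.mem_singleton]
      exact ⟨fun h => hsingle p y h, fun h => by rw [h]; exact kerGRelOn_refl' _ _ _ _⟩
    rw [hblocks, Finset.prod_image (fun x _ y _ h => Finset.singleton_injective h)]
    exact Finset.prod_congr rfl (fun p _ => by rw [blockProd_singleton'])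

end
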